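/- arXiv:2009.13236 — 2 statements merged into one kernel-verified Lean document; each statement's English description precedes it below -/
import Mathlib

section
/- Let H, 𝓗 be Hilbert spaces with 𝓗 a unitary realisation of H*, let W_j →^M W be Mosco-convergent closed subspaces of H, and let A : H → 𝓗 be compactly perturbed coercive and invertible on W. Then there exists J such that for all j ≥ J, A is invertible on W_j, and sup_{j≥J} ‖(P_{𝓦_j} A|_{W_j})^{-1}‖ < ∞; moreover for any f ∈ 𝓗, the Galerkin solutions u_{W_j} := (P_{𝓦_j} A|_{W_j})^{-1} f converge in norm to u_W := (P_𝓦 A|_W)^{-1} f. -/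
open Filter Topology

noncomputable section MoscoAux

variable {H : Type*} [NormedAddCommGroup H] [InnerProductSpace ℂ H] [CompleteSpace H]

local notation "⟪" x ", " y "⟫" => @inner ℂ _ _ x y

lemma wconv_clm' {x : ℕ → H} {x₀ : H}
    (h : ∀ v : H, Tendsto (fun n => ⟪x n, v⟫) atTop (𝓝 ⟪x₀, v⟫))
    (φ : H →L[ℂ] ℂ) : Tendsto (fun n => φ (x n)) atTop (𝓝 (φ x₀)) := by
  set w := (InnerProductSpace.toDual ℂ H).symm φ with hw
  have hφ : ∀ z : H, φ z = ⟪w, z⟫ := fun z => (InnerProductSpace.toDual_symm_apply).symm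
  have h2 : Tendsto (fun n => star ⟪x n, w⟫) atTop (𝓝 (star ⟪x₀, w⟫)) := (h w).star
  have h3 : ∀ z : H, star ⟪z, w⟫ = ⟪w, z⟫ := fun z => inner_conj_symm w z
  simp only [h3] at h2
  simpa only [hφ] using h2

lemma exists_weak_subseq' (x : ℕ → H) (R : ℝ) (hR : ∀ n, ‖x n‖ ≤ R) :
    ∃ (x₀ : H) (φ : ℕ → ℕ), StrictMono φ ∧
      ∀ v : H, Tendsto (fun n => ⟪x (φ n), v⟫) atTop (𝓝 ⟪x₀, v⟫) := by
  have hR0 : 0 ≤ R := le_trans (norm_nonneg _) (hR 0)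
  -- Step 1: diagonal extraction on the countable test family `x k`.
  have hcpt : IsCompact (Set.univ.pi (fun _ : ℕ => Metric.closedBall (0 : ℂ) (R * R))) :=
    isCompact_univ_pi fun _ => isCompact_closedBall _ _
  have hmem : ∀ n, (fun k => ⟪x n, x k⟫) ∈
      Set.univ.pi (fun _ : ℕ => Metric.closedBall (0 : ℂ) (R * R)) := by
    intro n k _
    simp only [Metric.mem_closedBall, dist_zero_right]
    calc ‖⟪x n, x k⟫‖ ≤ ‖x n‖ * ‖x k‖ := norm_inner_le_norm _ _
      _ ≤ R * R := mul_le_mul (hR n) (hR k) (norm_nonneg _) hR0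
  obtain ⟨l, -, φ, hφ, hconv⟩ := hcpt.tendsto_subseq hmem
  have hpt : ∀ k, Tendsto (fun n => ⟪x (φ n), x k⟫) atTop (𝓝 (l k)) := by
    rw [tendsto_pi_nhds] at hconv
    exact fun k => hconv k
  -- Step 2: convergence on the span.
  have hspan : ∀ v ∈ Submodule.span ℂ (Set.range x),
      ∃ c : ℂ, Tendsto (fun n => ⟪x (φ n), v⟫) atTop (𝓝 c) := by
    intro v hv
    induction hv using Submodule.span_induction with
    | mem v hv =>
        obtain ⟨k, rfl⟩ := hv
        exact ⟨l k, hpt k⟩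
    | zero => exact ⟨0, by simp⟩
    | add u v _ _ hu hv =>
        obtain ⟨c, hc⟩ := hu; obtain ⟨d, hd⟩ := hv
        exact ⟨c + d, by simpa only [inner_add_right] using hc.add hd⟩
    | smul c u _ hu =>
        obtain ⟨d, hd⟩ := hu
        exact ⟨c * d, by simpa only [inner_smul_right] using hd.const_mul c⟩
  -- Step 3: convergence on the closure of the span.
  set K : Submodule ℂ H := (Submodule.span ℂ (Set.range x)).topologicalClosure with hK
  have hxK : ∀ n, x n ∈ K :=
    fun n => Submodule.le_topologicalClosure _ (Submodule.subset_span ⟨n, rfl⟩)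
  have hclos : ∀ v ∈ K, ∃ c : ℂ, Tendsto (fun n => ⟪x (φ n), v⟫) atTop (𝓝 c) := by
    intro v hv
    have hC : CauchySeq (fun n => ⟪x (φ n), v⟫) := by
      rw [Metric.cauchySeq_iff]
      intro ε hε
      obtain ⟨v', hv'V, hv'⟩ : ∃ v' ∈ Submodule.span ℂ (Set.range x),
          ‖v - v'‖ < ε / (3 * (R + 1)) := by
        have hvc : v ∈ closure ((Submodule.span ℂ (Set.range x) : Submodule ℂ H) : Set H) := hv
        rw [Metric.mem_closure_iff] at hvc
        obtain ⟨v', hv', hd⟩ := hvc (ε / (3 * (R + 1))) (div_pos hε (by linarith))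
        exact ⟨v', hv', by rwa [dist_eq_norm] at hd⟩
      obtain ⟨c, hc⟩ := hspan v' hv'V
      have hc' := hc.cauchySeq
      rw [Metric.cauchySeq_iff] at hc'
      obtain ⟨N, hN⟩ := hc' (ε / 3) (by positivity)
      refine ⟨N, fun m hm n hn => ?_⟩
      have key : ∀ j : ℕ, dist ⟪x (φ j), v⟫ ⟪x (φ j), v'⟫ ≤ ε / 3 := by
        intro j
        rw [dist_eq_norm, ← inner_sub_right]
        have h1 : ‖⟪x (φ j), v - v'⟫‖ ≤ R * (ε / (3 * (R + 1))) :=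
          le_trans (norm_inner_le_norm _ _)
            (mul_le_mul (hR _) hv'.le (norm_nonneg _) hR0)
        have h2 : R * (ε / (3 * (R + 1))) ≤ ε / 3 := by
          have hne : R + 1 ≠ 0 := by linarith
          have he : R * (ε / (3 * (R + 1))) = (R / (R + 1)) * (ε / 3) := by
            field_simp
          rw [he]
          calc (R / (R + 1)) * (ε / 3) ≤ 1 * (ε / 3) := by
                apply mul_le_mul_of_nonneg_right _ (by positivity)
                rw [div_le_one (by linarith)]
                linarith
            _ = ε / 3 := one_mul _
        exact h1.trans h2
      calc dist ⟪x (φ m), v⟫ ⟪x (φ n), v⟫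
          ≤ dist ⟪x (φ m), v⟫ ⟪x (φ m), v'⟫ + dist ⟪x (φ m), v'⟫ ⟪x (φ n), v'⟫ +
            dist ⟪x (φ n), v'⟫ ⟪x (φ n), v⟫ := dist_triangle4 _ _ _ _
        _ < ε / 3 + ε / 3 + ε / 3 := by
            have := hN m hm n hn
            have k1 := key m
            have k2 := key n
            rw [dist_comm ⟪x (φ n), v'⟫ ⟪x (φ n), v⟫] at *
            linarith [key m, key n, hN m hm n hn]
        _ = ε := by ring
    exact cauchySeq_tendsto_of_complete hC
  -- Step 4: convergence everywhere via orthogonal projection.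
  haveI : CompleteSpace K := (Submodule.span ℂ (Set.range x)).isClosed_topologicalClosure.completeSpace_coe
  have hall : ∀ v : H, ∃ c : ℂ, Tendsto (fun n => ⟪x (φ n), v⟫) atTop (𝓝 c) := by
    intro v
    obtain ⟨c, hc⟩ := hclos (Submodule.orthogonalProjectionOnto K v : H) (Submodule.orthogonalProjectionOnto K v).2
    refine ⟨c, ?_⟩
    have heq : ∀ n : ℕ, ⟪x (φ n), v⟫ = ⟪x (φ n), (Submodule.orthogonalProjectionOnto K v : H)⟫ := by
      intro n
      have h0 : ⟪x (φ n), v - Submodule.orthogonalProjectionOnto K v⟫ = 0 :=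
        Submodule.inner_right_of_mem_orthogonal (hxK _)
          (Submodule.sub_starProjection_mem_orthogonal v)
      rw [inner_sub_right] at h0
      linear_combination h0
    simpa only [heq] using hc
  -- Step 5: represent the limit functional.
  choose L hL using hall
  have hLadd : ∀ u v : H, L (u + v) = L u + L v := by
    intro u v
    refine tendsto_nhds_unique (hL (u + v)) ?_
    simpa only [inner_add_right] using (hL u).add (hL v)
  have hLsmul : ∀ (c : ℂ) (v : H), L (c • v) = c * L v := by
    intro c v
    refine tendsto_nhds_unique (hL (c • v)) ?_
    simpa only [inner_smul_right] using (hL v).const_mul c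
  have hLbound : ∀ v : H, ‖L v‖ ≤ R * ‖v‖ := by
    intro v
    refine le_of_tendsto (hL v).norm (Filter.Eventually.of_forall fun n => ?_)
    exact le_trans (norm_inner_le_norm _ _)
      (mul_le_mul_of_nonneg_right (hR _) (norm_nonneg _))
  set Lf : H →L[ℂ] ℂ := LinearMap.mkContinuous
    { toFun := L, map_add' := hLadd, map_smul' := hLsmul } R hLbound with hLf
  refine ⟨(InnerProductSpace.toDual ℂ H).symm Lf, φ, hφ, fun v => ?_⟩
  have : ⟪(InnerProductSpace.toDual ℂ H).symm Lf, v⟫ = Lf v :=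
    InnerProductSpace.toDual_symm_apply
  rw [this]
  exact hL v

lemma compact_weak_to_strong' (T : H → H) (hT : IsCompactOperator T)
    (hTr : ∀ (t : ℝ) (u : H), T ((t : ℂ) • u) = (t : ℂ) • T u)
    (B : H →L[ℂ] H →L[ℂ] ℂ) (hTB : ∀ u v, ⟪T u, v⟫ = B u v)
    (x : ℕ → H) (x₀ : H) (R : ℝ) (hbd : ∀ n, ‖x n‖ ≤ R)
    (hw : ∀ v : H, Tendsto (fun n => ⟪x n, v⟫) atTop (𝓝 ⟪x₀, v⟫)) :
    Tendsto (fun n => T (x n)) atTop (𝓝 (T x₀)) := by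
  have hR0 : 0 ≤ R := le_trans (norm_nonneg _) (hbd 0)
  obtain ⟨K, hK, hKmem⟩ := hT
  obtain ⟨r, hr, hball⟩ := Metric.mem_nhds_iff.mp hKmem
  set c : ℝ := (r / 2) / (R + 1) with hc
  have hc0 : 0 < c := by positivity
  have hmem : ∀ n, T (x n) ∈ (fun y => ((c : ℂ))⁻¹ • y) '' K := by
    intro n
    refine ⟨T ((c : ℂ) • x n), hball ?_, ?_⟩
    · rw [Metric.mem_ball, dist_zero_right, norm_smul]
      have : ‖(c : ℂ)‖ = c := by
        rw [Complex.norm_real, Real.norm_eq_abs, abs_of_pos hc0]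
      rw [this]
      calc c * ‖x n‖ ≤ c * R := mul_le_mul_of_nonneg_left (hbd n) hc0.le
        _ < c * (R + 1) := by linarith
        _ = r / 2 := by
            rw [hc]
            field_simp
        _ < r := by linarith
    · rw [hTr]
      show ((c : ℂ))⁻¹ • ((c : ℂ) • T (x n)) = T (x n)
      rw [smul_smul, inv_mul_cancel₀ (by exact_mod_cast hc0.ne'), one_smul]
  have hKc : IsCompact ((fun y => ((c : ℂ))⁻¹ • y) '' K) :=
    hK.image (continuous_const_smul _)
  apply Filter.tendsto_of_subseq_tendsto
  intro ns hns
  obtain ⟨y, -, ms, hms, hy⟩ := hKc.tendsto_subseq (x := fun m => T (x (ns m)))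
    (fun m => hmem (ns m))
  refine ⟨ms, ?_⟩
  have hyx : y = T x₀ := by
    refine ext_inner_right ℂ fun v => ?_
    have h1 : Tendsto (fun m => ⟪T (x (ns (ms m))), v⟫) atTop (𝓝 ⟪y, v⟫) :=
      hy.inner tendsto_const_nhds
    have h2 : Tendsto (fun m => ⟪T (x (ns (ms m))), v⟫) atTop (𝓝 ⟪T x₀, v⟫) := by
      simp only [hTB]
      have hb : Tendsto (fun n => B (x n) v) atTop (𝓝 (B x₀ v)) := by
        simpa using wconv_clm' hw (B.flip v)
      exact hb.comp (hns.comp hms.tendsto_atTop)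
    exact tendsto_nhds_unique h1 h2
  rw [← hyx]
  exact hy

lemma core_lower_bound
    (C B₁ : H →L[ℂ] H →L[ℂ] ℂ) {α : ℝ} (hα : 0 < α)
    (hcoe : ∀ u : H, α * ‖u‖ ^ 2 ≤ ‖C u u - B₁ u u‖)
    (T₁ : H → H) (hT₁B : ∀ u v, ⟪T₁ u, v⟫ = B₁ u v) (hT₁c : IsCompactOperator T₁)
    (hT₁r : ∀ (t : ℝ) (u : H), T₁ ((t : ℂ) • u) = (t : ℂ) • T₁ u)
    (W : Submodule ℂ H) (Wj : ℕ → Submodule ℂ H)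
    (hM₁ : ∀ w ∈ W, ∃ u : ℕ → H, (∀ j, u j ∈ Wj j) ∧ Tendsto u atTop (𝓝 w))
    (hM₂ : ∀ (jm : ℕ → ℕ), StrictMono jm → ∀ (wm : ℕ → H) (w : H),
      (∀ m, wm m ∈ Wj (jm m)) →
      (∀ v : H, Tendsto (fun m => ⟪wm m, v⟫) atTop (𝓝 ⟪w, v⟫)) → w ∈ W)
    (hinj : ∀ u ∈ W, (∀ w ∈ W, C u w = 0) → u = 0) :
    ∃ β : ℝ, 0 < β ∧ ∃ J₀ : ℕ, ∀ j, J₀ ≤ j → ∀ u ∈ Wj j, ∀ y ∈ Wj j,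
      (∀ v ∈ Wj j, ⟪y, v⟫ = C u v) → β * ‖u‖ ≤ ‖y‖ := by
  by_contra hcon
  push_neg at hcon
  have hfreq : ∀ n : ℕ, ∃ᶠ j in atTop, ∃ u ∈ Wj j, ‖u‖ = 1 ∧ ∃ y ∈ Wj j,
      (∀ v ∈ Wj j, ⟪y, v⟫ = C u v) ∧ ‖y‖ < 1 / (n + 1 : ℝ) := by
    intro n
    rw [Filter.frequently_atTop]
    intro J₀
    obtain ⟨j, hj, u, huW, y, hyW, hcond, hlt⟩ := hcon (1 / (n + 1 : ℝ)) (by positivity) J₀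
    have hu0 : u ≠ 0 := by
      rintro rfl
      rw [norm_zero, mul_zero] at hlt
      exact absurd hlt (not_lt.mpr (norm_nonneg _))
    have hun : ‖u‖ ≠ 0 := norm_ne_zero_iff.mpr hu0
    refine ⟨j, hj, ((‖u‖ : ℂ))⁻¹ • u, Submodule.smul_mem _ _ huW, ?_,
      ((‖u‖ : ℂ))⁻¹ • y, Submodule.smul_mem _ _ hyW, ?_, ?_⟩
    · rw [norm_smul, norm_inv, Complex.norm_real, Real.norm_eq_abs, abs_of_nonneg (norm_nonneg u),
        inv_mul_cancel₀ hun]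
    · intro v hv
      rw [inner_smul_left, map_smul, hcond v hv]
      simp [Complex.conj_ofReal]
    · rw [norm_smul, norm_inv, Complex.norm_real, Real.norm_eq_abs, abs_of_nonneg (norm_nonneg u)]
      rw [inv_mul_lt_iff₀ (lt_of_le_of_ne (norm_nonneg u) (Ne.symm hun))]
      calc ‖y‖ < 1 / (n + 1 : ℝ) * ‖u‖ := hlt
        _ = ‖u‖ * (1 / (n + 1 : ℝ)) := by ring
      
  obtain ⟨φ, hφmono, hφ⟩ := Filter.extraction_forall_of_frequently hfreq
  choose u huW hunorm y hyW hycond hylt using hφ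
  obtain ⟨uinf, ms, hms, hweak⟩ := exists_weak_subseq' u 1 (fun n => (hunorm n).le)
  have hjm : StrictMono (φ ∘ ms) := hφmono.comp hms
  have huinfW : uinf ∈ W :=
    hM₂ (φ ∘ ms) hjm (fun m => u (ms m)) uinf (fun m => huW (ms m)) hweak
  have hyto0 : Tendsto (fun m => ‖y (ms m)‖) atTop (𝓝 0) := by
    have hle : ∀ m : ℕ, ‖y (ms m)‖ ≤ 1 / (m + 1 : ℝ) := by
      intro m
      refine (hylt (ms m)).le.trans ?_
      apply one_div_le_one_div_of_le (by positivity)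
      have h : m ≤ ms m := hms.le_apply
      exact_mod_cast Nat.succ_le_succ h
    exact squeeze_zero (fun m => norm_nonneg _) hle tendsto_one_div_add_atTop_nhds_zero_nat
  have hCzero : ∀ w ∈ W, C uinf w = 0 := by
    intro w hw
    obtain ⟨ws, hwsW, hws⟩ := hM₁ w hw
    obtain ⟨Rw, hRw⟩ : ∃ Rw : ℝ, ∀ j, ‖ws j‖ ≤ Rw := by
      obtain ⟨Rw, hRw⟩ := hws.norm.bddAbove_range
      exact ⟨Rw, fun j => hRw ⟨j, rfl⟩⟩
    have hws' : Tendsto (fun m => ws (φ (ms m))) atTop (𝓝 w) :=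
      hws.comp hjm.tendsto_atTop
    have h1 : Tendsto (fun m => C (u (ms m)) (ws (φ (ms m)))) atTop (𝓝 (C uinf w)) := by
      have ha : Tendsto (fun m => C (u (ms m)) w) atTop (𝓝 (C uinf w)) := by
        simpa using wconv_clm' hweak (C.flip w)
      have hb : Tendsto (fun m => C (u (ms m)) (ws (φ (ms m)) - w)) atTop (𝓝 0) := by
        have hle : ∀ m : ℕ, ‖C (u (ms m)) (ws (φ (ms m)) - w)‖ ≤
            ‖C‖ * 1 * ‖ws (φ (ms m)) - w‖ := by
          intro m
          calc ‖C (u (ms m)) (ws (φ (ms m)) - w)‖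
              ≤ ‖C‖ * ‖u (ms m)‖ * ‖ws (φ (ms m)) - w‖ := C.le_opNorm₂ _ _
            _ ≤ ‖C‖ * 1 * ‖ws (φ (ms m)) - w‖ := by
                have h1 : ‖C‖ * ‖u (ms m)‖ ≤ ‖C‖ * 1 :=
                  mul_le_mul_of_nonneg_left (hunorm (ms m)).le (norm_nonneg C)
                exact mul_le_mul_of_nonneg_right h1 (norm_nonneg _)
        have hg : Tendsto (fun m => ‖C‖ * 1 * ‖ws (φ (ms m)) - w‖) atTop (𝓝 0) := by
          have hsub : Tendsto (fun m => ws (φ (ms m)) - w) atTop (𝓝 (w - w)) :=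
            hws'.sub tendsto_const_nhds
          rw [sub_self] at hsub
          simpa using hsub.norm.const_mul (‖C‖ * 1)
        exact squeeze_zero_norm hle hg
      have := ha.add hb
      rw [add_zero] at this
      refine this.congr fun m => ?_
      rw [← map_add]
      congr 1
      abel
    have h2 : Tendsto (fun m => C (u (ms m)) (ws (φ (ms m)))) atTop (𝓝 0) := by
      have hle : ∀ m : ℕ, ‖C (u (ms m)) (ws (φ (ms m)))‖ ≤ ‖y (ms m)‖ * Rw := by
        intro m
        rw [← hycond (ms m) _ (hwsW (φ (ms m)))]
        calc ‖⟪y (ms m), ws (φ (ms m))⟫‖ ≤ ‖y (ms m)‖ * ‖ws (φ (ms m))‖ :=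
              norm_inner_le_norm _ _
          _ ≤ ‖y (ms m)‖ * Rw :=
              mul_le_mul_of_nonneg_left (hRw _) (norm_nonneg _)
      exact squeeze_zero_norm hle (by simpa using hyto0.mul_const Rw)
    exact tendsto_nhds_unique h1 h2
  have huinf0 : uinf = 0 := hinj uinf huinfW hCzero
  have hT₁0 : T₁ (0 : H) = 0 := by
    have := hT₁r 0 0
    simpa using this
  have hT1 : Tendsto (fun m => T₁ (u (ms m))) atTop (𝓝 0) := by
    have := compact_weak_to_strong' T₁ hT₁c hT₁r B₁ hT₁B (fun m => u (ms m)) uinf 1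
      (fun m => (hunorm (ms m)).le) hweak
    rwa [huinf0, hT₁0] at this
  have hbound : ∀ m, α ≤ ‖⟪y (ms m), u (ms m)⟫‖ + ‖T₁ (u (ms m))‖ := by
    intro m
    have hco := hcoe (u (ms m))
    rw [hunorm (ms m)] at hco
    simp only [one_pow, mul_one] at hco
    have hCu : C (u (ms m)) (u (ms m)) = ⟪y (ms m), u (ms m)⟫ :=
      (hycond (ms m) _ (huW (ms m))).symm
    have hB₁ : ‖B₁ (u (ms m)) (u (ms m))‖ ≤ ‖T₁ (u (ms m))‖ := by
      rw [← hT₁B]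
      calc ‖⟪T₁ (u (ms m)), u (ms m)⟫‖ ≤ ‖T₁ (u (ms m))‖ * ‖u (ms m)‖ :=
            norm_inner_le_norm _ _
        _ = ‖T₁ (u (ms m))‖ := by rw [hunorm (ms m), mul_one]
    calc α ≤ ‖C (u (ms m)) (u (ms m)) - B₁ (u (ms m)) (u (ms m))‖ := hco
      _ ≤ ‖C (u (ms m)) (u (ms m))‖ + ‖B₁ (u (ms m)) (u (ms m))‖ := norm_sub_le _ _
      _ ≤ ‖⟪y (ms m), u (ms m)⟫‖ + ‖T₁ (u (ms m))‖ := by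
          rw [hCu]
          exact add_le_add le_rfl hB₁
  have htend : Tendsto (fun m => ‖⟪y (ms m), u (ms m)⟫‖ + ‖T₁ (u (ms m))‖) atTop (𝓝 0) := by
    have h1 : Tendsto (fun m => ‖⟪y (ms m), u (ms m)⟫‖) atTop (𝓝 0) := by
      apply squeeze_zero (fun m => norm_nonneg _) (fun m => ?_) hyto0
      calc ‖⟪y (ms m), u (ms m)⟫‖ ≤ ‖y (ms m)‖ * ‖u (ms m)‖ := norm_inner_le_norm _ _
        _ = ‖y (ms m)‖ := by rw [hunorm (ms m), mul_one]
    have h2 : Tendsto (fun m => ‖T₁ (u (ms m))‖) atTop (𝓝 0) := by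
      simpa using hT1.norm
    simpa using h1.add h2
  have : α ≤ 0 := ge_of_tendsto htend (Filter.Eventually.of_forall hbound)
  linarith

lemma galerkin_solve (B : H →L[ℂ] H →L[ℂ] ℂ) (V : Submodule ℂ H) (hVc : IsClosed (V : Set H))
    {β : ℝ} (hβ : 0 < β)
    (h1 : ∀ u ∈ V, ∀ y ∈ V, (∀ v ∈ V, ⟪y, v⟫ = B u v) → β * ‖u‖ ≤ ‖y‖)
    (h2 : ∀ u ∈ V, ∀ y ∈ V, (∀ v ∈ V, ⟪y, v⟫ = B v u) → β * ‖u‖ ≤ ‖y‖)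
    (g : H) : ∃! u : H, u ∈ V ∧ ∀ v ∈ V, B u v = ⟪g, v⟫ := by
  haveI : CompleteSpace V := hVc.completeSpace_coe
  set Q : H →L[ℂ] H := V.subtypeL.comp (Submodule.orthogonalProjectionOnto V) with hQdef
  have hQmem : ∀ z : H, Q z ∈ V := fun z => (Submodule.orthogonalProjectionOnto V z).2
  have hQinner : ∀ z v : H, v ∈ V → ⟪Q z, v⟫ = ⟪z, v⟫ := by
    intro z v hv
    have h0 : ⟪z - Q z, v⟫ = 0 :=
      Submodule.inner_left_of_mem_orthogonal hv (Submodule.sub_starProjection_mem_orthogonal z)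
    rw [inner_sub_left] at h0
    linear_combination -h0
  set TA : H → H := fun u => (InnerProductSpace.toDual ℂ H).symm (B u) with hTAdef
  have hTAinner : ∀ u v : H, ⟪TA u, v⟫ = B u v := fun u v =>
    InnerProductSpace.toDual_symm_apply
  have hTAcont : Continuous TA :=
    (InnerProductSpace.toDual ℂ H).symm.continuous.comp B.continuous
  have hTAsub : ∀ u u' : H, TA (u - u') = TA u - TA u' := by
    intro u u'
    simp only [hTAdef, map_sub]
  -- the image submodule
  set M : Submodule ℂ H :=
    { carrier := {z : H | ∃ u ∈ V, Q (TA u) = z}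
      add_mem' := by
        rintro a b ⟨ua, hua, rfl⟩ ⟨ub, hub, rfl⟩
        refine ⟨ua + ub, V.add_mem hua hub, ?_⟩
        simp only [hTAdef, map_add]
      zero_mem' := ⟨0, V.zero_mem, by simp only [hTAdef, map_zero]⟩
      smul_mem' := by
        rintro c z ⟨u, hu, rfl⟩
        refine ⟨(starRingEnd ℂ) c • u, V.smul_mem _ hu, ?_⟩
        have : TA ((starRingEnd ℂ) c • u) = c • TA u := by
          simp only [hTAdef, map_smul]
          rw [LinearIsometryEquiv.map_smulₛₗ]
          simp
        rw [this, map_smul] } with hMdef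
  have hMV : ∀ z ∈ M, z ∈ V := by
    rintro z ⟨u, hu, rfl⟩
    exact hQmem _
  have hMc : IsClosed (M : Set H) := by
    apply IsSeqClosed.isClosed
    intro zs z hzs hz
    choose us husV hus using hzs
    have hCauchy : CauchySeq us := by
      have hz' : CauchySeq zs := hz.cauchySeq
      rw [Metric.cauchySeq_iff] at hz' ⊢
      intro ε hε
      obtain ⟨N, hN⟩ := hz' (β * ε) (by positivity)
      refine ⟨N, fun m hm n hn => ?_⟩
      have key : β * ‖us m - us n‖ ≤ ‖zs m - zs n‖ := by
        apply h1 (us m - us n) (V.sub_mem (husV m) (husV n)) (zs m - zs n)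
          (V.sub_mem (by rw [← hus m]; exact hQmem _) (by rw [← hus n]; exact hQmem _))
        intro v hv
        rw [← hus m, ← hus n, inner_sub_left, hQinner _ _ hv, hQinner _ _ hv,
          hTAinner, hTAinner, ← ContinuousLinearMap.sub_apply, ← map_sub]
      have hlt : dist (zs m) (zs n) < β * ε := hN m hm n hn
      rw [dist_eq_norm] at hlt ⊢
      have : β * ‖us m - us n‖ < β * ε := lt_of_le_of_lt key hlt
      exact lt_of_mul_lt_mul_left this hβ.le
    obtain ⟨u, hu⟩ := cauchySeq_tendsto_of_complete hCauchy
    have huV : u ∈ V := hVc.mem_of_tendsto hu (Filter.Eventually.of_forall husV)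
    refine ⟨u, huV, ?_⟩
    have hcont : Tendsto (fun n => Q (TA (us n))) atTop (𝓝 (Q (TA u))) :=
      (Q.continuous.comp hTAcont).continuousAt.tendsto.comp hu
    have : Tendsto zs atTop (𝓝 (Q (TA u))) := by
      refine hcont.congr fun n => hus n
    exact tendsto_nhds_unique this hz
  haveI : CompleteSpace M := hMc.completeSpace_coe
  have hVM : ∀ w ∈ V, w ∈ M := by
    intro w hw
    have hPM : (Submodule.orthogonalProjectionOnto M w : H) ∈ M := (Submodule.orthogonalProjectionOnto M w).2
    set z : H := w - Submodule.orthogonalProjectionOnto M w with hzdef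
    have hzV : z ∈ V := V.sub_mem hw (hMV _ hPM)
    have hzOrth : ∀ m ∈ M, ⟪m, z⟫ = 0 := fun m hm =>
      Submodule.inner_right_of_mem_orthogonal hm (Submodule.sub_starProjection_mem_orthogonal w)
    have hBz : ∀ u ∈ V, B u z = 0 := by
      intro u hu
      have h0 : ⟪Q (TA u), z⟫ = 0 := hzOrth _ ⟨u, hu, rfl⟩
      rwa [hQinner _ _ hzV, hTAinner] at h0
    set y₀ : H := Q ((InnerProductSpace.toDual ℂ H).symm (B.flip z)) with hy₀def
    have hy₀V : y₀ ∈ V := hQmem _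
    have hy₀inner : ∀ v ∈ V, ⟪y₀, v⟫ = B v z := by
      intro v hv
      rw [hy₀def, hQinner _ _ hv]
      exact InnerProductSpace.toDual_symm_apply
    have h2z := h2 z hzV y₀ hy₀V hy₀inner
    have hyy : ⟪y₀, y₀⟫ = 0 := by
      rw [hy₀inner y₀ hy₀V]
      exact hBz y₀ hy₀V
    have hy0 : y₀ = 0 := inner_self_eq_zero.mp hyy
    rw [hy0, norm_zero] at h2z
    have hz0 : z = 0 := by
      have : ‖z‖ ≤ 0 := by
        by_contra hcon
        push_neg at hcon
        nlinarith
      exact norm_le_zero_iff.mp this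
    have : w = (Submodule.orthogonalProjectionOnto M w : H) := by
      have := sub_eq_zero.mp hz0
      exact this
    rw [this]
    exact hPM
  obtain ⟨u, huV, huQ⟩ := hVM (Q g) (hQmem g)
  have husol : ∀ v ∈ V, B u v = ⟪g, v⟫ := by
    intro v hv
    have : ⟪Q (TA u), v⟫ = ⟪Q g, v⟫ := by rw [huQ]
    rwa [hQinner _ _ hv, hQinner _ _ hv, hTAinner] at this
  refine ⟨u, ⟨huV, husol⟩, ?_⟩
  · rintro u' ⟨hu'V, hu'⟩
    have key : β * ‖u' - u‖ ≤ ‖(0 : H)‖ := by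
      apply h1 (u' - u) (V.sub_mem hu'V huV) 0 V.zero_mem
      intro v hv
      rw [inner_zero_left, map_sub, ContinuousLinearMap.sub_apply, hu' v hv, husol v hv,
        sub_self]
    rw [norm_zero] at key
    have : ‖u' - u‖ ≤ 0 := by nlinarith
    have h0 : u' - u = 0 := norm_le_zero_iff.mp this
    exact sub_eq_zero.mp h0

lemma galerkin_converge
    (B B₁ : H →L[ℂ] H →L[ℂ] ℂ) {α : ℝ} (hα : 0 < α)
    (hcoe : ∀ u : H, α * ‖u‖ ^ 2 ≤ ‖B u u - B₁ u u‖)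
    (T₁ : H → H) (hT₁B : ∀ u v, ⟪T₁ u, v⟫ = B₁ u v) (hT₁c : IsCompactOperator T₁)
    (hT₁r : ∀ (t : ℝ) (u : H), T₁ ((t : ℂ) • u) = (t : ℂ) • T₁ u)
    (W : Submodule ℂ H) (Wj : ℕ → Submodule ℂ H)
    (hM₁ : ∀ w ∈ W, ∃ u : ℕ → H, (∀ j, u j ∈ Wj j) ∧ Tendsto u atTop (𝓝 w))
    (hM₂ : ∀ (jm : ℕ → ℕ), StrictMono jm → ∀ (wm : ℕ → H) (w : H),
      (∀ m, wm m ∈ Wj (jm m)) →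
      (∀ v : H, Tendsto (fun m => ⟪wm m, v⟫) atTop (𝓝 ⟪w, v⟫)) → w ∈ W)
    (g : H) (u : H) (hu : u ∈ W) (husol : ∀ v ∈ W, B u v = ⟪g, v⟫)
    (huniq : ∀ u' : H, u' ∈ W → (∀ v ∈ W, B u' v = ⟪g, v⟫) → u' = u)
    (R₁ : ℝ) (u' : ℕ → H) (hu'W : ∀ j, u' j ∈ Wj j) (hu'b : ∀ j, ‖u' j‖ ≤ R₁)
    (J₀ : ℕ) (hu'sol : ∀ j, J₀ ≤ j → ∀ v ∈ Wj j, B (u' j) v = ⟪g, v⟫) :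
    Tendsto u' atTop (𝓝 u) := by
  obtain ⟨ws, hwsW, hws⟩ := hM₁ u hu
  obtain ⟨Rw, hRw⟩ : ∃ Rw : ℝ, ∀ j, ‖ws j‖ ≤ Rw := by
    obtain ⟨Rw, hRw⟩ := hws.norm.bddAbove_range
    exact ⟨Rw, fun j => hRw ⟨j, rfl⟩⟩
  set x : ℕ → H := fun j => u' j - ws j with hxdef
  have hxW : ∀ j, x j ∈ Wj j := fun j => (Wj j).sub_mem (hu'W j) (hwsW j)
  set Rx : ℝ := R₁ + Rw with hRxdef
  have hxb : ∀ j, ‖x j‖ ≤ Rx := by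
    intro j
    calc ‖u' j - ws j‖ ≤ ‖u' j‖ + ‖ws j‖ := norm_sub_le _ _
      _ ≤ R₁ + Rw := add_le_add (hu'b j) (hRw j)
  have hT₁0 : T₁ (0 : H) = 0 := by simpa using hT₁r 0 0
  -- Key subsequence principle: along any subsequence, a further one along which x ⇀ 0.
  have key : ∀ ns : ℕ → ℕ, Tendsto ns atTop atTop → ∃ ms : ℕ → ℕ,
      ∀ v : H, Tendsto (fun i => ⟪x (ns (ms i)), v⟫) atTop (𝓝 ⟪(0 : H), v⟫) := by
    intro ns hns
    obtain ⟨φ₁, hφ₁, hnsφ₁⟩ := strictMono_subseq_of_tendsto_atTop hns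
    obtain ⟨xinf, φ₂, hφ₂, hweak⟩ :=
      exists_weak_subseq' (fun i => x (ns (φ₁ i))) Rx (fun i => hxb _)
    set jm : ℕ → ℕ := fun i => ns (φ₁ (φ₂ i)) with hjmdef
    have hjm : StrictMono jm := hnsφ₁.comp hφ₂
    have hjmtend : Tendsto jm atTop atTop := hjm.tendsto_atTop
    have hwsjm : Tendsto (fun i => ws (jm i)) atTop (𝓝 u) := hws.comp hjmtend
    have hu'weak : ∀ v : H, Tendsto (fun i => ⟪u' (jm i), v⟫) atTop (𝓝 ⟪xinf + u, v⟫) := by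
      intro v
      have h1 : Tendsto (fun i => ⟪x (jm i), v⟫) atTop (𝓝 ⟪xinf, v⟫) := hweak v
      have h2 : Tendsto (fun i => ⟪ws (jm i), v⟫) atTop (𝓝 ⟪u, v⟫) :=
        hwsjm.inner tendsto_const_nhds
      have h3 := h1.add h2
      rw [← inner_add_left] at h3
      refine h3.congr fun i => ?_
      rw [← inner_add_left]
      congr 1
      simp [hxdef]
    have hlimW : xinf + u ∈ W :=
      hM₂ jm hjm (fun i => u' (jm i)) _ (fun i => hu'W _) hu'weak
    have hsol : ∀ ω ∈ W, B (xinf + u) ω = ⟪g, ω⟫ := by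
      intro ω hω
      obtain ⟨os, hosW, hos⟩ := hM₁ ω hω
      have hosjm : Tendsto (fun i => os (jm i)) atTop (𝓝 ω) := hos.comp hjmtend
      have h1 : Tendsto (fun i => B (u' (jm i)) (os (jm i))) atTop (𝓝 (B (xinf + u) ω)) := by
        have ha : Tendsto (fun i => B (u' (jm i)) ω) atTop (𝓝 (B (xinf + u) ω)) := by
          simpa using wconv_clm' hu'weak (B.flip ω)
        have hb : Tendsto (fun i => B (u' (jm i)) (os (jm i) - ω)) atTop (𝓝 0) := by
          have hle : ∀ i : ℕ, ‖B (u' (jm i)) (os (jm i) - ω)‖ ≤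
              ‖B‖ * R₁ * ‖os (jm i) - ω‖ := by
            intro i
            calc ‖B (u' (jm i)) (os (jm i) - ω)‖
                ≤ ‖B‖ * ‖u' (jm i)‖ * ‖os (jm i) - ω‖ := B.le_opNorm₂ _ _
              _ ≤ ‖B‖ * R₁ * ‖os (jm i) - ω‖ := by
                  have hh : ‖B‖ * ‖u' (jm i)‖ ≤ ‖B‖ * R₁ :=
                    mul_le_mul_of_nonneg_left (hu'b _) (norm_nonneg B)
                  exact mul_le_mul_of_nonneg_right hh (norm_nonneg _)
          have hg : Tendsto (fun i => ‖B‖ * R₁ * ‖os (jm i) - ω‖) atTop (𝓝 0) := by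
            have hsub : Tendsto (fun i => os (jm i) - ω) atTop (𝓝 (ω - ω)) :=
              hosjm.sub tendsto_const_nhds
            rw [sub_self] at hsub
            simpa using hsub.norm.const_mul (‖B‖ * R₁)
          exact squeeze_zero_norm hle hg
        have h3 := ha.add hb
        rw [add_zero] at h3
        refine h3.congr fun i => ?_
        rw [← map_add]
        congr 1
        abel
      have h2 : Tendsto (fun i => B (u' (jm i)) (os (jm i))) atTop (𝓝 ⟪g, ω⟫) := by
        have hgos : Tendsto (fun i => ⟪g, os (jm i)⟫) atTop (𝓝 ⟪g, ω⟫) :=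
          Filter.Tendsto.inner tendsto_const_nhds hosjm
        apply hgos.congr'
        have hev : ∀ᶠ i in atTop, J₀ ≤ jm i := by
          filter_upwards [eventually_ge_atTop J₀] with i hi
          exact le_trans hi hjm.le_apply
        filter_upwards [hev] with i hi
        exact (hu'sol (jm i) hi _ (hosW (jm i))).symm
      exact tendsto_nhds_unique h1 h2
    have heq : xinf + u = u := huniq _ hlimW hsol
    have hxinf0 : xinf = 0 := by
      have := add_right_cancel (b := u) (a := xinf) (c := 0)
      apply this
      rw [zero_add]
      exact heq
    refine ⟨φ₁ ∘ φ₂, fun v => ?_⟩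
    have := hweak v
    rwa [hxinf0] at this
  -- strong convergence pieces
  have hT1x : Tendsto (fun j => T₁ (x j)) atTop (𝓝 0) := by
    apply Filter.tendsto_of_subseq_tendsto
    intro ns hns
    obtain ⟨ms, hmsw⟩ := key ns hns
    refine ⟨ms, ?_⟩
    have := compact_weak_to_strong' T₁ hT₁c hT₁r B₁ hT₁B (fun i => x (ns (ms i))) 0 Rx
      (fun i => hxb _) hmsw
    rwa [hT₁0] at this
  set TAu : H := (InnerProductSpace.toDual ℂ H).symm (B u) with hTAudef
  set h₀ : H := g - TAu with hh₀def
  have hh₀ : ∀ z : H, ⟪h₀, z⟫ = ⟪g, z⟫ - B u z := by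
    intro z
    rw [hh₀def, inner_sub_left, hTAudef]
    congr 1
    exact InnerProductSpace.toDual_symm_apply
  have hgx : Tendsto (fun j => ⟪h₀, x j⟫) atTop (𝓝 0) := by
    apply Filter.tendsto_of_subseq_tendsto
    intro ns hns
    obtain ⟨ms, hmsw⟩ := key ns hns
    refine ⟨ms, ?_⟩
    have h1 := (hmsw h₀).star
    have h2 : ∀ i : ℕ, star ⟪x (ns (ms i)), h₀⟫ = ⟪h₀, x (ns (ms i))⟫ := fun i =>
      inner_conj_symm h₀ _
    simp only [h2] at h1
    simpa using h1
  -- squeeze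
  set ε : ℕ → ℝ := fun j => ‖⟪h₀, x j⟫‖ + ‖B‖ * ‖ws j - u‖ * Rx + ‖T₁ (x j)‖ * Rx with hεdef
  have hεto0 : Tendsto ε atTop (𝓝 0) := by
    have e1 : Tendsto (fun j => ‖⟪h₀, x j⟫‖) atTop (𝓝 0) := by simpa using hgx.norm
    have e2 : Tendsto (fun j => ‖B‖ * ‖ws j - u‖ * Rx) atTop (𝓝 0) := by
      have hsub : Tendsto (fun j => ws j - u) atTop (𝓝 (u - u)) := hws.sub tendsto_const_nhds
      rw [sub_self] at hsub
      have := (hsub.norm.const_mul ‖B‖).mul_const Rx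
      simpa using this
    have e3 : Tendsto (fun j => ‖T₁ (x j)‖ * Rx) atTop (𝓝 0) := by
      have := hT1x.norm.mul_const Rx
      simpa using this
    have := (e1.add e2).add e3
    simpa using this
  have hle : ∀ᶠ j in atTop, α * ‖x j‖ ^ 2 ≤ ε j := by
    filter_upwards [eventually_ge_atTop J₀] with j hj
    have hxx : B (x j) (x j) = ⟪h₀, x j⟫ - B (ws j - u) (x j) := by
      have e1 : B (x j) (x j) = B (u' j) (x j) - B (ws j) (x j) := by
        have hsub : B (x j) = B (u' j) - B (ws j) := map_sub B (u' j) (ws j)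
        rw [hsub, ContinuousLinearMap.sub_apply]
      have e2 : B (u' j) (x j) = ⟪g, x j⟫ := hu'sol j hj _ (hxW j)
      have e3 : B (ws j) (x j) = B u (x j) + B (ws j - u) (x j) := by
        have hsum : B (ws j) = B u + B (ws j - u) := by
          rw [← map_add]
          congr 1
          abel
        rw [hsum, ContinuousLinearMap.add_apply]
      rw [e1, e2, e3, hh₀]
      ring
    calc α * ‖x j‖ ^ 2 ≤ ‖B (x j) (x j) - B₁ (x j) (x j)‖ := hcoe (x j)
      _ ≤ ‖B (x j) (x j)‖ + ‖B₁ (x j) (x j)‖ := norm_sub_le _ _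
      _ ≤ (‖⟪h₀, x j⟫‖ + ‖B (ws j - u) (x j)‖) + ‖B₁ (x j) (x j)‖ := by
          apply add_le_add_left
          rw [hxx]
          exact norm_sub_le _ _
      _ ≤ ε j := by
          rw [hεdef]
          have b1 : ‖B (ws j - u) (x j)‖ ≤ ‖B‖ * ‖ws j - u‖ * Rx := by
            calc ‖B (ws j - u) (x j)‖ ≤ ‖B‖ * ‖ws j - u‖ * ‖x j‖ := B.le_opNorm₂ _ _
              _ ≤ ‖B‖ * ‖ws j - u‖ * Rx := by
                  apply mul_le_mul_of_nonneg_left (hxb j)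
                  positivity
          have b2 : ‖B₁ (x j) (x j)‖ ≤ ‖T₁ (x j)‖ * Rx := by
            rw [← hT₁B]
            calc ‖⟪T₁ (x j), x j⟫‖ ≤ ‖T₁ (x j)‖ * ‖x j‖ := norm_inner_le_norm _ _
              _ ≤ ‖T₁ (x j)‖ * Rx := mul_le_mul_of_nonneg_left (hxb j) (norm_nonneg _)
          have := add_le_add (add_le_add (le_refl ‖⟪h₀, x j⟫‖) b1) b2
          simpa using this
  have hxsq : Tendsto (fun j => ‖x j‖ ^ 2) atTop (𝓝 0) := by
    have hdiv : Tendsto (fun j => ε j / α) atTop (𝓝 0) := by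
      have := hεto0.div_const α
      simpa using this
    apply tendsto_of_tendsto_of_tendsto_of_le_of_le' tendsto_const_nhds hdiv
    · exact Filter.Eventually.of_forall fun j => sq_nonneg _
    · filter_upwards [hle] with j hj
      rw [le_div_iff₀ hα]
      linarith
  have hxnorm : Tendsto (fun j => ‖x j‖) atTop (𝓝 0) := by
    have hsq : Tendsto (fun j => Real.sqrt (‖x j‖ ^ 2)) atTop (𝓝 (Real.sqrt 0)) :=
      (Real.continuous_sqrt.tendsto 0).comp hxsq
    rw [Real.sqrt_zero] at hsq
    refine hsq.congr fun j => ?_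
    rw [Real.sqrt_sq (norm_nonneg _)]
  have hx0 : Tendsto x atTop (𝓝 0) := tendsto_zero_iff_norm_tendsto_zero.mpr hxnorm
  have := hx0.add hws
  rw [zero_add] at this
  refine this.congr fun j => ?_
  simp [hxdef]

end MoscoAux


section Main

local notation "⟪" x ", " y "⟫" => @inner ℂ _ _ x y

/-- Lemma 2.5 of the paper: Let `H`, `𝓗` be Hilbert spaces with `𝓗` a unitary
realisation of `H*` via `J`, let closed subspaces `W_j` Mosco-converge to the closed subspace
`W`, and let `A = A₀ + A₁ : H → 𝓗` be compactly perturbed coercive and invertible on `W`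
(expressed variationally: for every `f ∈ 𝓗` the problem `⟨A u, v⟩ = ⟨f, v⟩ ∀ v ∈ W` has a
unique solution `u ∈ W`).  Then there is `J₀` such that for all `j ≥ J₀` the operator `A` is
invertible on `W_j`, the inverses are uniformly bounded (`‖u‖ ≤ C ‖f‖` for the Galerkin
solution `u` on `W_j`), and for each `f ∈ 𝓗` the Galerkin solutions `u_{W_j}` converge in
norm to the solution `u_W` on `W`. -/
theorem stmt_7
    {H 𝓗 : Type*}
    [NormedAddCommGroup H] [InnerProductSpace ℂ H] [CompleteSpace H]
    [NormedAddCommGroup 𝓗] [InnerProductSpace ℂ 𝓗] [CompleteSpace 𝓗]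
    (J : 𝓗 ≃ₗᵢ[ℂ] StrongDual ℂ H)
    (A A₀ A₁ : H →L[ℂ] 𝓗)
    (hA : A = A₀ + A₁)
    (hcoerc : ∃ α : ℝ, 0 < α ∧ ∀ u : H, α * ‖u‖ ^ 2 ≤ ‖J (A₀ u) u‖)
    (hcomp : IsCompactOperator (A₁ : H → 𝓗))
    (W : Submodule ℂ H) (hW : IsClosed (W : Set H))
    (Wj : ℕ → Submodule ℂ H) (hWj : ∀ j, IsClosed ((Wj j : Set H)))
    (hMosco₁ : ∀ w ∈ W, ∃ u : ℕ → H, (∀ j, u j ∈ Wj j) ∧ Tendsto u atTop (𝓝 w))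
    (hMosco₂ : ∀ (jm : ℕ → ℕ), StrictMono jm → ∀ (wm : ℕ → H) (w : H),
      (∀ m, wm m ∈ Wj (jm m)) →
      (∀ v : H, Tendsto (fun m => (inner ℂ (wm m) v : ℂ)) atTop (𝓝 (inner ℂ w v))) →
      w ∈ W)
    (hinvW : ∀ f : 𝓗, ∃! u : H, u ∈ W ∧ ∀ v ∈ W, J (A u) v = J f v) :
    ∃ J₀ : ℕ,
      (∀ j ≥ J₀, ∀ f : 𝓗, ∃! u : H, u ∈ Wj j ∧ ∀ v ∈ Wj j, J (A u) v = J f v) ∧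
      (∃ C : ℝ, ∀ j ≥ J₀, ∀ (f : 𝓗) (u : H), u ∈ Wj j →
        (∀ v ∈ Wj j, J (A u) v = J f v) → ‖u‖ ≤ C * ‖f‖) ∧
      (∀ (f : 𝓗) (u : H), u ∈ W → (∀ v ∈ W, J (A u) v = J f v) →
        ∀ uj : ℕ → H,
          (∀ j ≥ J₀, uj j ∈ Wj j ∧ ∀ v ∈ Wj j, J (A (uj j)) v = J f v) →
          Tendsto uj atTop (𝓝 u)) := by
  obtain ⟨α, hα, hcoA⟩ := hcoerc
  -- the bilinear forms
  have mkB : ∀ T : H →L[ℂ] 𝓗, ∃ B : H →L[ℂ] H →L[ℂ] ℂ, ∀ u v : H, B u v = J (T u) v := by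
    intro T
    refine ⟨LinearMap.mkContinuous₂
      (LinearMap.mk₂ ℂ (fun u v => J (T u) v)
        (fun u u' v => by
          show J (T (u + u')) v = J (T u) v + J (T u') v
          rw [map_add, map_add]; rfl)
        (fun c u v => by
          show J (T (c • u)) v = c • (J (T u) v)
          rw [map_smul, map_smul]; rfl)
        (fun u v v' => by
          show J (T u) (v + v') = J (T u) v + J (T u) v'
          rw [map_add])
        (fun c u v => by
          show J (T u) (c • v) = c • (J (T u) v)
          rw [map_smul]))
      ‖T‖ (fun u v => ?_), fun u v => rfl⟩
    calc ‖J (T u) v‖ ≤ ‖J (T u)‖ * ‖v‖ := (J (T u)).le_opNorm v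
      _ = ‖T u‖ * ‖v‖ := by rw [J.norm_map]
      _ ≤ ‖T‖ * ‖u‖ * ‖v‖ :=
          mul_le_mul_of_nonneg_right (T.le_opNorm u) (norm_nonneg v)
  obtain ⟨𝔸, h𝔸⟩ := mkB A
  obtain ⟨𝔸₁, h𝔸₁⟩ := mkB A₁
  -- coercivity in form language
  have hcoe : ∀ u : H, α * ‖u‖ ^ 2 ≤ ‖𝔸 u u - 𝔸₁ u u‖ := by
    intro u
    have : 𝔸 u u - 𝔸₁ u u = J (A₀ u) u := by
      rw [h𝔸, h𝔸₁, hA]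
      have : J ((A₀ + A₁) u) = J (A₀ u) + J (A₁ u) := by
        rw [ContinuousLinearMap.add_apply, map_add]
      rw [this, ContinuousLinearMap.add_apply]
      ring
    rw [this]
    exact hcoA u
  -- compact representer
  set T₁ : H → H := fun u => (InnerProductSpace.toDual ℂ H).symm (𝔸₁ u) with hT₁def
  have hT₁B : ∀ u v : H, ⟪T₁ u, v⟫ = 𝔸₁ u v := fun u v =>
    InnerProductSpace.toDual_symm_apply
  have hT₁r : ∀ (t : ℝ) (u : H), T₁ ((t : ℂ) • u) = (t : ℂ) • T₁ u := by
    intro t u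
    rw [hT₁def]
    simp only [map_smul]
    rw [LinearIsometryEquiv.map_smulₛₗ]
    simp [Complex.conj_ofReal]
  have h𝔸₁eq : ∀ u : H, 𝔸₁ u = J (A₁ u) := by
    intro u
    ext v
    exact h𝔸₁ u v
  have hT₁c : IsCompactOperator T₁ := by
    obtain ⟨K, hK, hKmem⟩ := hcomp
    refine ⟨(fun y : 𝓗 => (InnerProductSpace.toDual ℂ H).symm (J y)) '' K,
      hK.image ((InnerProductSpace.toDual ℂ H).symm.continuous.comp J.continuous), ?_⟩
    refine Filter.mem_of_superset hKmem fun u hu => ⟨A₁ u, hu, ?_⟩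
    rw [hT₁def]
    simp only
    rw [h𝔸₁eq]
  -- Riesz version of solvability on W
  have hinv : ∀ g : H, ∃! u : H, u ∈ W ∧ ∀ v ∈ W, 𝔸 u v = ⟪g, v⟫ := by
    intro g
    have hfg : ∀ v : H, J (J.symm ((InnerProductSpace.toDual ℂ H) g)) v = ⟪g, v⟫ := by
      intro v
      rw [J.apply_symm_apply]
      exact InnerProductSpace.toDual_apply_apply
    obtain ⟨u, ⟨huW, husol⟩, huniq⟩ := hinvW (J.symm ((InnerProductSpace.toDual ℂ H) g))
    refine ⟨u, ⟨huW, fun v hv => by rw [h𝔸, husol v hv, hfg]⟩, ?_⟩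
    rintro u' ⟨hu'W, hu'sol⟩
    exact huniq u' ⟨hu'W, fun v hv => by rw [← h𝔸, hu'sol v hv, hfg]⟩
  -- injectivity statements
  have hinj₁ : ∀ u ∈ W, (∀ w ∈ W, 𝔸 u w = 0) → u = 0 := by
    intro u huW h0
    obtain ⟨z, hz, huniq⟩ := hinv 0
    have h1 : u = z := huniq u ⟨huW, fun v hv => by rw [h0 v hv, inner_zero_left]⟩
    have h2 : (0 : H) = z := huniq 0 ⟨W.zero_mem, fun v hv => by
      rw [map_zero, inner_zero_left]; rfl⟩
    rw [h1, ← h2]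
  have hinj₂ : ∀ u ∈ W, (∀ w ∈ W, 𝔸 w u = 0) → u = 0 := by
    intro u huW h0
    obtain ⟨w, ⟨hwW, hwsol⟩, -⟩ := hinv u
    have : ⟪u, u⟫ = 0 := by rw [← hwsol u huW, h0 w hwW]
    exact inner_self_eq_zero.mp this
  -- the two lower bounds
  obtain ⟨β₁, hβ₁, J₁, hJ₁⟩ := core_lower_bound 𝔸 𝔸₁ hα hcoe T₁ hT₁B hT₁c hT₁r W Wj
    hMosco₁ hMosco₂ hinj₁
  obtain ⟨β₂, hβ₂, J₂, hJ₂⟩ := core_lower_bound 𝔸.flip 𝔸₁ hα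
    (fun u => by rw [ContinuousLinearMap.flip_apply]; exact hcoe u)
    T₁ hT₁B hT₁c hT₁r W Wj hMosco₁ hMosco₂
    (fun u huW h0 => hinj₂ u huW (fun w hw => by
      have := h0 w hw
      rwa [ContinuousLinearMap.flip_apply] at this))
  set β : ℝ := min β₁ β₂ with hβdef
  have hβ : 0 < β := lt_min hβ₁ hβ₂
  set J₀ : ℕ := max J₁ J₂ with hJ₀def
  have hb1 : ∀ j, J₀ ≤ j → ∀ u ∈ Wj j, ∀ y ∈ Wj j,
      (∀ v ∈ Wj j, ⟪y, v⟫ = 𝔸 u v) → β * ‖u‖ ≤ ‖y‖ := by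
    intro j hj u hu y hy hcond
    refine le_trans ?_ (hJ₁ j (le_trans (le_max_left _ _) hj) u hu y hy hcond)
    exact mul_le_mul_of_nonneg_right (min_le_left _ _) (norm_nonneg _)
  have hb2 : ∀ j, J₀ ≤ j → ∀ u ∈ Wj j, ∀ y ∈ Wj j,
      (∀ v ∈ Wj j, ⟪y, v⟫ = 𝔸 v u) → β * ‖u‖ ≤ ‖y‖ := by
    intro j hj u hu y hy hcond
    refine le_trans ?_ (hJ₂ j (le_trans (le_max_right _ _) hj) u hu y hy (fun v hv => by
      rw [ContinuousLinearMap.flip_apply]; exact hcond v hv))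
    exact mul_le_mul_of_nonneg_right (min_le_right _ _) (norm_nonneg _)
  -- uniform bound statement
  have hstab : ∀ j, J₀ ≤ j → ∀ (f : 𝓗) (u : H), u ∈ Wj j →
      (∀ v ∈ Wj j, J (A u) v = J f v) → ‖u‖ ≤ β⁻¹ * ‖f‖ := by
    intro j hj f u huW husol
    haveI : CompleteSpace (Wj j) := (hWj j).completeSpace_coe
    set g : H := (InnerProductSpace.toDual ℂ H).symm (J f) with hgdef
    have hgf : ∀ v : H, ⟪g, v⟫ = J f v := fun v => InnerProductSpace.toDual_symm_apply
    set y : H := (Wj j).subtypeL ((Submodule.orthogonalProjectionOnto (Wj j)) g) with hydef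
    have hyW : y ∈ Wj j := (Submodule.orthogonalProjectionOnto (Wj j) g).2
    have hyinner : ∀ v ∈ Wj j, ⟪y, v⟫ = 𝔸 u v := by
      intro v hv
      have h0 : ⟪g - y, v⟫ = 0 :=
        Submodule.inner_left_of_mem_orthogonal hv
          (Submodule.sub_starProjection_mem_orthogonal g)
      rw [inner_sub_left, sub_eq_zero] at h0
      rw [← h0, hgf, ← husol v hv, h𝔸]
    have hkey := hb1 j hj u huW y hyW hyinner
    have hyle : ‖y‖ ≤ ‖g‖ := by
      rw [hydef]
      calc ‖((Submodule.orthogonalProjectionOnto (Wj j) g : Wj j) : H)‖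
          = ‖Submodule.orthogonalProjectionOnto (Wj j) g‖ := rfl
        _ ≤ ‖Submodule.orthogonalProjectionOnto (Wj j)‖ * ‖g‖ := (Submodule.orthogonalProjectionOnto (Wj j)).le_opNorm g
        _ ≤ 1 * ‖g‖ := mul_le_mul_of_nonneg_right (Submodule.orthogonalProjectionOnto_norm_le (K := Wj j)) (norm_nonneg _)
        _ = ‖g‖ := one_mul _
    have hgnorm : ‖g‖ = ‖f‖ := by
      rw [hgdef, LinearIsometryEquiv.norm_map, J.norm_map]
    rw [inv_mul_eq_div, le_div_iff₀ hβ]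
    calc ‖u‖ * β = β * ‖u‖ := mul_comm _ _
      _ ≤ ‖y‖ := hkey
      _ ≤ ‖g‖ := hyle
      _ = ‖f‖ := hgnorm
  refine ⟨J₀, ?_, ⟨β⁻¹, fun j hj f u hu hsol => hstab j hj f u hu hsol⟩, ?_⟩
  · -- solvability for j ≥ J₀
    intro j hj f
    set g : H := (InnerProductSpace.toDual ℂ H).symm (J f) with hgdef
    have hgf : ∀ v : H, ⟪g, v⟫ = J f v := fun v => InnerProductSpace.toDual_symm_apply
    obtain ⟨u, ⟨huW, husol⟩, huniq⟩ := galerkin_solve 𝔸 (Wj j) (hWj j) hβ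
      (hb1 j hj) (hb2 j hj) g
    refine ⟨u, ⟨huW, fun v hv => by rw [← h𝔸, husol v hv, hgf]⟩, ?_⟩
    rintro u' ⟨hu'W, hu'sol⟩
    exact huniq u' ⟨hu'W, fun v hv => by rw [h𝔸, hu'sol v hv, hgf]⟩
  · -- convergence
    intro f u huW husol uj hujsol
    set g : H := (InnerProductSpace.toDual ℂ H).symm (J f) with hgdef
    have hgf : ∀ v : H, ⟪g, v⟫ = J f v := fun v => InnerProductSpace.toDual_symm_apply
    have husol' : ∀ v ∈ W, 𝔸 u v = ⟪g, v⟫ := fun v hv => by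
      rw [h𝔸, husol v hv, hgf]
    have huniq : ∀ u' : H, u' ∈ W → (∀ v ∈ W, 𝔸 u' v = ⟪g, v⟫) → u' = u := by
      intro u' hu'W hu'sol
      obtain ⟨z, hz, hzuniq⟩ := hinv g
      rw [hzuniq u' ⟨hu'W, hu'sol⟩, hzuniq u ⟨huW, husol'⟩]
    set u'' : ℕ → H := fun j => if J₀ ≤ j then uj j else 0 with hu''def
    have hu''W : ∀ j, u'' j ∈ Wj j := by
      intro j
      simp only [hu''def]
      by_cases h : J₀ ≤ j
      · rw [if_pos h]; exact (hujsol j h).1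
      · rw [if_neg h]; exact (Wj j).zero_mem
    have hu''b : ∀ j, ‖u'' j‖ ≤ β⁻¹ * ‖f‖ := by
      intro j
      simp only [hu''def]
      by_cases h : J₀ ≤ j
      · rw [if_pos h]
        exact hstab j h f (uj j) (hujsol j h).1 (hujsol j h).2
      · rw [if_neg h, norm_zero]
        positivity
    have hu''sol : ∀ j, J₀ ≤ j → ∀ v ∈ Wj j, 𝔸 (u'' j) v = ⟪g, v⟫ := by
      intro j hj v hv
      simp only [hu''def, if_pos hj]
      rw [h𝔸, (hujsol j hj).2 v hv, hgf]
    have hconv := galerkin_converge 𝔸 𝔸₁ hα hcoe T₁ hT₁B hT₁c hT₁r W Wj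
      hMosco₁ hMosco₂ g u huW husol' huniq (β⁻¹ * ‖f‖) u'' hu''W hu''b J₀ hu''sol
    refine hconv.congr' ?_
    filter_upwards [eventually_ge_atTop J₀] with j hj
    simp only [hu''def, if_pos hj]
end Main
end

section
/- Let (W_j) be closed subspaces of a Hilbert space H with W_j →^M W (Mosco), and let V_j ⊆ W_j be closed subspaces such that there is a dense subspace W̃ ⊆ W with inf_{v ∈ V_j} ‖w − v‖ → 0 as j → ∞ for every w ∈ W̃. Then V_j →^M W. -/
open Filter Topology Metric

/-- Lemma 2.4 of Chandler-Wilde et al.: Let `(W_j)` be closed subspaces of a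
Hilbert space `H` Mosco-converging to the closed subspace `W`, and let `V_j ⊆ W_j` be closed
subspaces such that there is a dense subspace `W̃ ⊆ W` with
`inf_{v ∈ V_j} ‖w − v‖ → 0` for every `w ∈ W̃`.  Then `V_j` Mosco-converges to `W`. -/
theorem stmt_15
    {H : Type*} [NormedAddCommGroup H] [InnerProductSpace ℂ H] [CompleteSpace H]
    (W : Submodule ℂ H) (hW : IsClosed (W : Set H))
    (Wj : ℕ → Submodule ℂ H) (hWj : ∀ j, IsClosed ((Wj j : Set H)))
    (hMosco₁ : ∀ w ∈ W, ∃ u : ℕ → H, (∀ j, u j ∈ Wj j) ∧ Tendsto u atTop (𝓝 w))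
    (hMosco₂ : ∀ (jm : ℕ → ℕ), StrictMono jm → ∀ (wm : ℕ → H) (w : H),
      (∀ m, wm m ∈ Wj (jm m)) →
      (∀ v : H, Tendsto (fun m => (inner ℂ (wm m) v : ℂ)) atTop (𝓝 (inner ℂ w v))) →
      w ∈ W)
    (Vj : ℕ → Submodule ℂ H) (hVj : ∀ j, IsClosed ((Vj j : Set H)))
    (hVW : ∀ j, Vj j ≤ Wj j)
    (Wt : Submodule ℂ H) (hWt : Wt ≤ W)
    (hdense : (W : Set H) ⊆ closure (Wt : Set H))
    (happrox : ∀ w ∈ Wt, Tendsto (fun j => infDist w (Vj j : Set H)) atTop (𝓝 0)) :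
    (∀ w ∈ W, ∃ u : ℕ → H, (∀ j, u j ∈ Vj j) ∧ Tendsto u atTop (𝓝 w)) ∧
    (∀ (jm : ℕ → ℕ), StrictMono jm → ∀ (wm : ℕ → H) (w : H),
      (∀ m, wm m ∈ Vj (jm m)) →
      (∀ v : H, Tendsto (fun m => (inner ℂ (wm m) v : ℂ)) atTop (𝓝 (inner ℂ w v))) →
      w ∈ W) := by
  constructor
  · intro w hw
    have hinf : ∀ ε > 0, ∀ᶠ j in atTop, infDist w (Vj j : Set H) < ε := by
      intro ε hε
      obtain ⟨wt, hwt, hdist⟩ : ∃ wt ∈ (Wt : Set H), dist w wt < ε / 2 := by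
        have h := hdense hw
        rw [Metric.mem_closure_iff] at h
        exact h (ε / 2) (by linarith)
      have h2 := (Metric.tendsto_nhds.1 (happrox wt hwt)) (ε / 2) (by linarith)
      filter_upwards [h2] with j hj
      have hle : infDist w (Vj j : Set H) ≤ infDist wt (Vj j : Set H) + dist w wt :=
        infDist_le_infDist_add_dist
      have habs : |infDist wt (Vj j : Set H)| < ε / 2 := by
        simpa [Real.dist_eq] using hj
      have hnn : (0:ℝ) ≤ infDist wt (Vj j : Set H) := infDist_nonneg
      rw [abs_of_nonneg hnn] at habs
      linarith
    have hne : ∀ j, ((Vj j : Set H)).Nonempty := fun j => ⟨0, Submodule.zero_mem _⟩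
    have hch : ∀ j, ∃ v ∈ (Vj j : Set H),
        dist w v < infDist w (Vj j : Set H) + 1 / (j + 1) := by
      intro j
      refine (Metric.infDist_lt_iff (hne j)).1 ?_
      have : (0:ℝ) < 1 / (j + 1) := by positivity
      linarith
    choose u hu hud using hch
    refine ⟨u, hu, ?_⟩
    rw [Metric.tendsto_nhds]
    intro ε hε
    have h1 := hinf (ε / 2) (by linarith)
    have h2 : ∀ᶠ j : ℕ in atTop, (1:ℝ) / (j + 1) < ε / 2 :=
      tendsto_one_div_add_atTop_nhds_zero_nat.eventually (gt_mem_nhds (by linarith))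
    filter_upwards [h1, h2] with j hj1 hj2
    have := hud j
    rw [dist_comm]
    calc dist w (u j) < infDist w (Vj j : Set H) + 1 / (j + 1) := this
      _ < ε / 2 + ε / 2 := by linarith
      _ = ε := by ring
  · intro jm hjm wm w hmem hweak
    exact hMosco₂ jm hjm wm w (fun m => hVW _ (hmem m)) hweak
end
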